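/- Let P ∈ R^{p×r} have orthonormal columns and D = diag(d_1, ..., d_r) with d_1 ≥ d_2 ≥ ... ≥ d_r ≥ 0. If F ∈ F_r, then ⟨P D P^T, P P^T − F⟩ ≥ (d_r / 2) ‖P P^T − F‖_F². -/

import Mathlib

open MeasureTheory ProbabilityTheory Matrix Real
open scoped Classical

noncomputable section

/-- Frobenius norm of a real matrix. -/
def frob {m n : ℕ} (M : Matrix (Fin m) (Fin n) ℝ) : ℝ :=
  Real.sqrt (∑ i, ∑ j, (M i j) ^ 2)

/-- Distance between `p × r` matrices modulo right multiplication by an orthogonal matrix: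
`dist(U,V) = min_{P ∈ O(r)} ‖U P - V‖_F`. -/
def gdist {p r : ℕ} (U V : Matrix (Fin p) (Fin r) ℝ) : ℝ :=
  sInf {x : ℝ | ∃ P : Matrix (Fin r) (Fin r) ℝ, Pᵀ * P = 1 ∧ x = frob (U * P - V)}

/-- Square root of a positive semidefinite matrix (as `Matrix.PosSemidef.sqrt` was defined in
Mathlib before its removal). -/
def Matrix.PosSemidef.sqrt {n : Type*} [Fintype n] [DecidableEq n]
    {A : Matrix n n ℝ} (hA : A.PosSemidef) : Matrix n n ℝ :=
  hA.1.eigenvectorUnitary.1 * diagonal ((↑) ∘ (√·) ∘ hA.1.eigenvalues) *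
  (star hA.1.eigenvectorUnitary : Matrix n n ℝ)

/-- Centered multivariate Gaussian with covariance `S`, as the law of `S^{1/2} z` for a
standard Gaussian vector `z`. -/
def mvGaussian {m : ℕ} (S : Matrix (Fin m) (Fin m) ℝ) : Measure (Fin m → ℝ) :=
  if h : S.PosSemidef then
    (Measure.pi fun _ : Fin m => gaussianReal 0 1).map fun z => h.sqrt.mulVec z
  else 0

/-- Law of `n` i.i.d. samples from `N_m(0, S)`. -/
def iidLaw (n : ℕ) {m : ℕ} (S : Matrix (Fin m) (Fin m) ℝ) : Measure (Fin n → Fin m → ℝ) :=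
  Measure.pi fun _ : Fin n => mvGaussian S

def sampleMean {n m : ℕ} (X : Fin n → Fin m → ℝ) (i : Fin m) : ℝ := (∑ t, X t i) / n

/-- Sample covariance matrix. -/
def sampleCov {n m : ℕ} (X : Fin n → Fin m → ℝ) : Matrix (Fin m) (Fin m) ℝ :=
  Matrix.of fun i j => (∑ t, (X t i - sampleMean X i) * (X t j - sampleMean X j)) / n

/-- Block-diagonal part of a matrix with respect to block labels `β`. -/
def blockPart {m k : ℕ} (β : Fin m → Fin k) (M : Matrix (Fin m) (Fin m) ℝ) :
    Matrix (Fin m) (Fin m) ℝ :=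
  Matrix.of fun i j => if β i = β j then M i j else 0

/-- Rows of `M` belonging to block `i`, all other rows zeroed out. -/
def restrictRows {m k c : ℕ} (β : Fin m → Fin k) (i : Fin k) (M : Matrix (Fin m) (Fin c) ℝ) :
    Matrix (Fin m) (Fin c) ℝ :=
  Matrix.of fun a b => if β a = i then M a b else 0

/-- ℓ₂ norm of row `i` of `M`. -/
def rowNorm {m r : ℕ} (M : Matrix (Fin m) (Fin r) ℝ) (i : Fin m) : ℝ :=
  Real.sqrt (∑ j, (M i j) ^ 2)

/-- Set of indices of nonzero rows. -/
def rowSupport {m r : ℕ} (M : Matrix (Fin m) (Fin r) ℝ) : Set (Fin m) := {i | M i ≠ 0}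

/-- `W'` is the hard thresholding of `W` keeping the `k` rows of largest ℓ₂ norm
(ties broken toward smaller indices). -/
def IsHT {m r : ℕ} (W : Matrix (Fin m) (Fin r) ℝ) (k : ℕ) (W' : Matrix (Fin m) (Fin r) ℝ) : Prop :=
  ∃ C : Finset (Fin m), C.card = min k m ∧ (∀ i ∈ C, W' i = W i) ∧ (∀ i ∉ C, W' i = 0) ∧
    ∀ i ∈ C, ∀ j ∉ C, rowNorm W j < rowNorm W i ∨ (rowNorm W j = rowNorm W i ∧ i < j)

/-- Positive semidefinite square root (junk value `0` if not psd). -/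
def psqrt {r : ℕ} (M : Matrix (Fin r) (Fin r) ℝ) : Matrix (Fin r) (Fin r) ℝ :=
  if h : M.PosSemidef then h.sqrt else 0

/-- Inverse square root. -/
def invSqrt {r : ℕ} (M : Matrix (Fin r) (Fin r) ℝ) : Matrix (Fin r) (Fin r) ℝ := (psqrt M)⁻¹

/-- Nuclear norm `Tr √(Mᵀ M)`. -/
def nucNorm {a b : ℕ} (M : Matrix (Fin a) (Fin b) ℝ) : ℝ := (psqrt (Mᵀ * M)).trace

/-- Entrywise ℓ₁ norm. -/
def l1Norm {a b : ℕ} (M : Matrix (Fin a) (Fin b) ℝ) : ℝ := ∑ i, ∑ j, |M i j|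

/-- Entrywise sup norm. -/
def maxAbs {a b : ℕ} (M : Matrix (Fin a) (Fin b) ℝ) : ℝ := sSup {x : ℝ | ∃ i j, x = |M i j|}

/-- Membership in the Fantope `{X : 0 ⪯ X ⪯ I, Tr X = r}`. -/
def InFantope {p : ℕ} (r : ℕ) (X : Matrix (Fin p) (Fin p) ℝ) : Prop :=
  X.PosSemidef ∧ (1 - X).PosSemidef ∧ X.trace = (r : ℝ)

/-- `F` minimizes `-⟨Sh, ·⟩ + ρ ‖·‖_1` over symmetric matrices whose conjugation by
`S0h^{1/2}` lies in the Fantope. -/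
def IsFantopeMin {p : ℕ} (r : ℕ) (Sh S0h : Matrix (Fin p) (Fin p) ℝ) (ρ : ℝ)
    (F : Matrix (Fin p) (Fin p) ℝ) : Prop :=
  F.IsSymm ∧ InFantope r (psqrt S0h * F * psqrt S0h) ∧
    ∀ G : Matrix (Fin p) (Fin p) ℝ, G.IsSymm → InFantope r (psqrt S0h * G * psqrt S0h) →
      -(Shᵀ * F).trace + ρ * l1Norm F ≤ -(Shᵀ * G).trace + ρ * l1Norm G

/-- `L` maximizes `⟨Sh, L Lᵀ⟩` subject to `Lᵀ S0h L = I_r` and row support inside `I`. -/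
def IsRestrictedMax {p r : ℕ} (Sh S0h : Matrix (Fin p) (Fin p) ℝ) (I : Finset (Fin p))
    (L : Matrix (Fin p) (Fin r) ℝ) : Prop :=
  Lᵀ * S0h * L = 1 ∧ (∀ i ∉ I, L i = 0) ∧
    ∀ L' : Matrix (Fin p) (Fin r) ℝ, L'ᵀ * S0h * L' = 1 → (∀ i ∉ I, L' i = 0) →
      (Shᵀ * (L' * L'ᵀ)).trace ≤ (Shᵀ * (L * Lᵀ)).trace

/-- Kullback–Leibler divergence `∫ log (dP/dQ) dP`. -/
def klDivR {α : Type*} [MeasurableSpace α] (P Q : Measure α) : ℝ :=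
  ∫ x, Real.log (P.rnDeriv Q x).toReal ∂P


lemma psd_diag_nonneg {n : ℕ} {M : Matrix (Fin n) (Fin n) ℝ} (hM : M.PosSemidef) (i : Fin n) :
    0 ≤ M i i := by
  exact hM.diag_nonneg

lemma psd_trace_nonneg {n : ℕ} {M : Matrix (Fin n) (Fin n) ℝ} (hM : M.PosSemidef) :
    0 ≤ M.trace := by
  exact Finset.sum_nonneg fun i _ => psd_diag_nonneg hM i

lemma psd_trace_mul_nonneg {n : ℕ} {A B : Matrix (Fin n) (Fin n) ℝ}
    (hA : A.PosSemidef) (hB : B.PosSemidef) : 0 ≤ (A * B).trace := by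
  open scoped Matrix.Norms.L2Operator MatrixOrder in
  obtain ⟨C, hC⟩ := CStarAlgebra.nonneg_iff_eq_star_mul_self.mp hB.nonneg
  rw [Matrix.star_eq_conjTranspose] at hC
  have h : (A * B).trace = (C * A * Cᴴ).trace := by
    rw [hC, ← Matrix.mul_assoc, Matrix.trace_mul_cycle]
  rw [h]
  exact psd_trace_nonneg (hA.mul_mul_conjTranspose_same C)

lemma trace_conj_helper {p r : ℕ} (P : Matrix (Fin p) (Fin r) ℝ)
    (D : Matrix (Fin r) (Fin r) ℝ) (A : Matrix (Fin p) (Fin p) ℝ) :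
    (P * D * Pᵀ * A).trace = (D * (Pᵀ * A * P)).trace := by
  rw [Matrix.mul_assoc (P * D), Matrix.trace_mul_comm (P * D), ← Matrix.mul_assoc,
    Matrix.trace_mul_comm]

/-- curvature of the Fantope. -/
theorem statement15
    (p r : ℕ) (hr : 1 ≤ r)
    (P : Matrix (Fin p) (Fin r) ℝ) (hP : Pᵀ * P = 1)
    (d : Fin r → ℝ) (hd : Antitone d) (hd0 : 0 ≤ d ⟨r - 1, by omega⟩)
    (F : Matrix (Fin p) (Fin p) ℝ)
    (hF1 : F.PosSemidef) (hF2 : (1 - F).PosSemidef) (hF3 : F.trace = (r : ℝ)) :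
    d ⟨r - 1, by omega⟩ / 2 * frob (P * Pᵀ - F) ^ 2 ≤
      ((P * Matrix.diagonal d * Pᵀ)ᵀ * (P * Pᵀ - F)).trace := by
  have hFsymm : Fᵀ = F := by
    have := hF1.1
    rwa [Matrix.IsHermitian, Matrix.conjTranspose_eq_transpose_of_trivial] at this
  set dm : ℝ := d ⟨r - 1, by omega⟩ with hdm
  set Pr : Matrix (Fin p) (Fin p) ℝ := P * Pᵀ with hPr
  have hPrt : Prᵀ = Pr := by rw [hPr, Matrix.transpose_mul, Matrix.transpose_transpose]
  set M : Matrix (Fin r) (Fin r) ℝ := Pᵀ * (1 - F) * P with hMdef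
  have hMpsd : M.PosSemidef := by
    have := hF2.conjTranspose_mul_mul_same P
    rwa [Matrix.conjTranspose_eq_transpose_of_trivial] at this
  have hM' : M = 1 - Pᵀ * F * P := by
    rw [hMdef, Matrix.mul_sub, Matrix.mul_one, Matrix.sub_mul, hP]
  set a : ℝ := (Pᵀ * F * P).trace with ha
  have htrM : M.trace = (r : ℝ) - a := by
    rw [hM', Matrix.trace_sub, Matrix.trace_one]
    simp [ha]
  -- trace of Pr * F equals a
  have hPrF : (Pr * F).trace = a := by
    rw [hPr, ha, Matrix.trace_mul_cycle Pᵀ F P]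
  have hFPr : (F * Pr).trace = a := by rw [Matrix.trace_mul_comm, hPrF]
  -- Pr is idempotent with trace r
  have hPrPr : Pr * Pr = Pr := by
    rw [hPr, Matrix.mul_assoc, ← Matrix.mul_assoc Pᵀ, hP, Matrix.one_mul]
  have htrPr : Pr.trace = (r : ℝ) := by
    rw [hPr, Matrix.trace_mul_comm, hP, Matrix.trace_one]
    simp
  -- Frobenius norm squared as a trace
  have hfrob : frob (Pr - F) ^ 2 = ((Pr - F)ᵀ * (Pr - F)).trace := by
    rw [frob, Real.sq_sqrt (by positivity)]
    rw [Matrix.trace]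
    simp only [Matrix.diag, Matrix.mul_apply, Matrix.transpose_apply]
    rw [Finset.sum_comm]
    simp [sq]
  have hexpand : ((Pr - F)ᵀ * (Pr - F)).trace = (r : ℝ) - 2 * a + (F * F).trace := by
    rw [Matrix.transpose_sub, hPrt, hFsymm, Matrix.sub_mul, Matrix.mul_sub, Matrix.mul_sub,
      Matrix.trace_sub, Matrix.trace_sub, Matrix.trace_sub, hPrPr, htrPr, hPrF, hFPr]
    ring
  have hFF : (F * F).trace ≤ (r : ℝ) := by
    have h0 : 0 ≤ (F * (1 - F)).trace := psd_trace_mul_nonneg hF1 hF2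
    rw [Matrix.mul_sub, Matrix.mul_one, Matrix.trace_sub, hF3] at h0
    linarith
  have hfrob2 : frob (Pr - F) ^ 2 ≤ 2 * M.trace := by
    rw [hfrob, hexpand, htrM]; linarith
  -- the RHS equals trace (diagonal d * M)
  have hRHS : ((P * Matrix.diagonal d * Pᵀ)ᵀ * (Pr - F)).trace
      = (Matrix.diagonal d * M).trace := by
    have ht : (P * Matrix.diagonal d * Pᵀ)ᵀ = P * Matrix.diagonal d * Pᵀ := by
      rw [Matrix.transpose_mul, Matrix.transpose_mul, Matrix.transpose_transpose,
        Matrix.diagonal_transpose, Matrix.mul_assoc]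
    have key : Pᵀ * (Pr - F) * P = M := by
      rw [hM', hPr, Matrix.mul_sub, Matrix.sub_mul, ← Matrix.mul_assoc,
        hP, Matrix.one_mul, hP]
    rw [ht, trace_conj_helper, key]
  -- diagonal comparison
  have hdiag : dm * M.trace ≤ (Matrix.diagonal d * M).trace := by
    rw [Matrix.trace, Matrix.trace, Finset.mul_sum]
    refine Finset.sum_le_sum fun j _ => ?_
    have h1 : (Matrix.diagonal d * M).diag j = d j * M j j := by
      simp [Matrix.diag, Matrix.diagonal_mul]
    rw [h1]
    have hj : (j : ℕ) < r := j.isLt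
    have h2 : dm ≤ d j := hd (by rw [Fin.le_def]; simp only [Fin.val_mk]; omega)
    have h3 : 0 ≤ M j j := psd_diag_nonneg hMpsd j
    exact mul_le_mul_of_nonneg_right h2 h3
  calc dm / 2 * frob (Pr - F) ^ 2 ≤ dm / 2 * (2 * M.trace) := by
        apply mul_le_mul_of_nonneg_left hfrob2 (by linarith)
    _ = dm * M.trace := by ring
    _ ≤ (Matrix.diagonal d * M).trace := hdiag
    _ = ((P * Matrix.diagonal d * Pᵀ)ᵀ * (Pr - F)).trace := hRHS.symm

end
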